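/- Let k ≥ 2. For a regular subset L ⊆ P, write L_i = {(i,j) ∈ L} ∪ {(m,i) ∈ P : (m,i) ∉ L} (each of cardinality k−1), and let Σ(L) denote the set of k-tuples σ = (σ_1,…,σ_k) where each σ_i : L_i → {0,…,k−2} is a bijection. Each σ ∈ Σ(L) determines a bijection φ_σ : P → {1,…,k} × {0,…,k−2} by φ_σ(i,j) = (i, σ_i(i,j)) if (i,j) ∈ L and φ_σ(i,j) = (j, σ_j(i,j)) if (i,j) ∉ L; let sgn(σ) denote the sign of the permutation obtained from φ_σ by identifying both index sets with {1,…,k(k−1)} via their lexicographic orders. Then det Ξ(λ,μ) = Σ_{L ⊆ P regular} Σ_{σ ∈ Σ(L)} sgn(σ) · ∏_{(i,j)∈L} λ_{ij}·a_{ij}^{σ_i(i,j)} · ∏_{(i,j)∉L} μ_{ij}·a_{ij}^{σ_j(i,j)}. -/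
import Mathlib


namespace ReducibleSpectral

noncomputable section

/-- The row index `(i, t)` (with `t : Fin (k-1)`) corresponds to the pair `(i, j) ∈ P`
(where `P = {(i,j) : i ≠ j}`), with `j` the `t`-th element of `{0,…,k-1} \ {i}`;
this identification is order-preserving for the lexicographic orders. -/
def colToRow (k : ℕ) (i : Fin k) (t : Fin (k - 1)) : Fin k :=
  if (t : ℕ) < (i : ℕ) then ⟨t, by have := t.isLt; omega⟩
  else ⟨(t : ℕ) + 1, by have := t.isLt; have := i.isLt; omega⟩

/-- The matrix `Ξ(λ,μ)`: rows indexed by `P = {(i,j) : i ≠ j}` (in lexicographic order,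
encoded via `colToRow`), columns indexed by pairs `(m,n)`, `m ∈ {1,…,k}`, `n ∈ {0,…,k-2}`
(lexicographic); the entry at row `(i,j)`, column `(m,n)` is `λ_{ij}·a_{ij}^n` if `m = i`,
`μ_{ij}·a_{ij}^n` if `m = j`, and `0` otherwise. -/
def Xi (k : ℕ) (a lam mu : Fin k → Fin k → ℂ) :
    Matrix (Fin k × Fin (k - 1)) (Fin k × Fin (k - 1)) ℂ :=
  fun p q =>
    if q.1 = p.1 then lam p.1 (colToRow k p.1 p.2) * a p.1 (colToRow k p.1 p.2) ^ (q.2 : ℕ)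
    else if q.1 = colToRow k p.1 p.2 then
      mu p.1 (colToRow k p.1 p.2) * a p.1 (colToRow k p.1 p.2) ^ (q.2 : ℕ)
    else 0

/-- The extended theta function `ϑ(λ,μ) = det Ξ(λ,μ)`. -/
def theta (k : ℕ) (a lam mu : Fin k → Fin k → ℂ) : ℂ := (Xi k a lam mu).det

/-- The index set `P = {(i,j) : i,j ∈ {1,…,k}, i ≠ j}` as a finset. -/
def Pfin (k : ℕ) : Finset (Fin k × Fin k) :=
  Finset.univ.filter fun p => p.1 ≠ p.2

/-- For `L ⊆ P`, the set `L_i = {(i,j) ∈ L} ∪ {(m,i) ∈ P : (m,i) ∉ L}`. -/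
def Lset (k : ℕ) (L : Finset (Fin k × Fin k)) (i : Fin k) : Finset (Fin k × Fin k) :=
  (L.filter fun p => p.1 = i) ∪ ((Pfin k \ L).filter fun p => p.2 = i)

/-- `L ⊆ P` is regular iff every `L_i` has cardinality `k - 1`. -/
def IsRegular (k : ℕ) (L : Finset (Fin k × Fin k)) : Prop :=
  ∀ i : Fin k, (Lset k L i).card = k - 1



section Aux

lemma colToRow_ne (k : ℕ) (i : Fin k) (t : Fin (k - 1)) : colToRow k i t ≠ i := by
  unfold colToRow
  split_ifs with h <;> (intro hc; rw [Fin.ext_iff] at hc; simp at hc; omega)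

lemma colToRow_injective (k : ℕ) (i : Fin k) : Function.Injective (colToRow k i) := by
  intro s t h
  unfold colToRow at h
  split_ifs at h with h1 h2 h3 <;>
    (rw [Fin.ext_iff] at h ⊢; simp at h ⊢; omega)

lemma colToRow_surj (k : ℕ) (i j : Fin k) (h : j ≠ i) :
    ∃ t : Fin (k - 1), colToRow k i t = j := by
  have hi := i.isLt; have hj := j.isLt
  have hne : (j : ℕ) ≠ (i : ℕ) := fun hh => h (Fin.ext hh)
  by_cases hlt : (j : ℕ) < (i : ℕ)
  · refine ⟨⟨j, by omega⟩, ?_⟩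
    unfold colToRow
    rw [if_pos (by simpa using hlt)]
  · refine ⟨⟨(j : ℕ) - 1, by omega⟩, ?_⟩
    unfold colToRow
    rw [if_neg (by simp; omega)]
    exact Fin.ext (by simp; omega)

/-- The map from row indices to pairs in `P`. -/
def rowPair (k : ℕ) (x : Fin k × Fin (k - 1)) : Fin k × Fin k :=
  (x.1, colToRow k x.1 x.2)

lemma rowPair_injective (k : ℕ) : Function.Injective (rowPair k) := by
  rintro ⟨x1, x2⟩ ⟨y1, y2⟩ h
  simp only [rowPair, Prod.mk.injEq] at h
  obtain ⟨h1, h2⟩ := h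
  subst h1
  exact congrArg _ (colToRow_injective k x1 h2)

lemma rowPair_mem (k : ℕ) (x : Fin k × Fin (k - 1)) : rowPair k x ∈ Pfin k := by
  simp only [Pfin, Finset.mem_filter, Finset.mem_univ, true_and, rowPair]
  exact fun hc => colToRow_ne k x.1 x.2 hc.symm

lemma rowPair_surjOn (k : ℕ) (q : Fin k × Fin k) (hq : q ∈ Pfin k) :
    ∃ x, rowPair k x = q := by
  simp only [Pfin, Finset.mem_filter, Finset.mem_univ, true_and] at hq
  obtain ⟨t, ht⟩ := colToRow_surj k q.1 q.2 (Ne.symm hq)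
  exact ⟨(q.1, t), by simp [rowPair, ht]⟩

lemma card_fst_eq (k : ℕ) (i : Fin k) :
    (Finset.univ.filter (fun y : Fin k × Fin (k - 1) => y.1 = i)).card = k - 1 := by
  have himg : (Finset.univ.filter (fun y : Fin k × Fin (k - 1) => y.1 = i))
      = Finset.univ.image (fun t : Fin (k - 1) => (i, t)) := by
    ext ⟨a, b⟩
    simp only [Finset.mem_filter, Finset.mem_univ, true_and, Finset.mem_image,
      Prod.mk.injEq]
    constructor
    · rintro rfl; exact ⟨b, rfl, rfl⟩
    · rintro ⟨t, rfl, rfl⟩; rfl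
  rw [himg, Finset.card_image_of_injective _ (fun s t h => (Prod.mk.injEq .. ▸ h).2)]
  simp

end Aux


/-- the full permutation expansion of `det Ξ`.

For a regular `L ⊆ P`, the tuples `σ ∈ Σ(L)` of bijections `σ_i : L_i ≃ {0,…,k-2}`
correspond exactly (with matching signs, under the lexicographic identifications)
to the permutations `π` of `{1,…,k} × {0,…,k-2}` such that, for each `x` encoding the
pair `p = (i,j) ∈ P`, the first coordinate of `π x` is `i` if `p ∈ L` and `j` if `p ∉ L`;
the exponent `σ_i(i,j)` (resp. `σ_j(i,j)`) is the second coordinate of `π x`. -/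


theorem theta_eq_sum_over_regular_and_bijections (k : ℕ) (hk : 2 ≤ k)
    (a lam mu : Fin k → Fin k → ℂ) :
    theta k a lam mu =
      ∑ L ∈ (Pfin k).powerset.filter (fun L => ∀ i : Fin k, (Lset k L i).card = k - 1),
        ∑ π ∈ (Finset.univ : Finset (Equiv.Perm (Fin k × Fin (k - 1)))).filter
            (fun π => ∀ x : Fin k × Fin (k - 1),
              (π x).1 = if (x.1, colToRow k x.1 x.2) ∈ L then x.1 else colToRow k x.1 x.2),
          ((Equiv.Perm.sign π : ℤ) : ℂ) *
            ∏ x : Fin k × Fin (k - 1),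
              (if (x.1, colToRow k x.1 x.2) ∈ L then lam x.1 (colToRow k x.1 x.2)
                else mu x.1 (colToRow k x.1 x.2)) *
                a x.1 (colToRow k x.1 x.2) ^ (((π x).2 : ℕ)) := by
  classical
  -- abbreviations
  set S := (Pfin k).powerset.filter (fun L => ∀ i : Fin k, (Lset k L i).card = k - 1) with hS
  have hrp : ∀ x : Fin k × Fin (k - 1), (x.1, colToRow k x.1 x.2) = rowPair k x :=
    fun _ => rfl
  -- key: for each permutation, the inner sum over regular L collapses
  have key : ∀ π : Equiv.Perm (Fin k × Fin (k - 1)),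
      (∑ L ∈ S,
        if (∀ x : Fin k × Fin (k - 1),
            (π x).1 = if rowPair k x ∈ L then x.1 else colToRow k x.1 x.2) then
          ((Equiv.Perm.sign π : ℤ) : ℂ) *
            ∏ x : Fin k × Fin (k - 1),
              (if rowPair k x ∈ L then lam x.1 (colToRow k x.1 x.2)
                else mu x.1 (colToRow k x.1 x.2)) *
                a x.1 (colToRow k x.1 x.2) ^ (((π x).2 : ℕ))
        else 0)
      = ((Equiv.Perm.sign π : ℤ) : ℂ) * ∏ x, Xi k a lam mu x (π x) := by
    intro π
    by_cases hg : ∀ x : Fin k × Fin (k - 1),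
        (π x).1 = x.1 ∨ (π x).1 = colToRow k x.1 x.2
    · -- good permutation: a unique regular L contributes
      set Lπ := (Finset.univ.filter (fun x : Fin k × Fin (k - 1) =>
        (π x).1 = x.1)).image (rowPair k) with hLπ
      have hmemL : ∀ x : Fin k × Fin (k - 1), rowPair k x ∈ Lπ ↔ (π x).1 = x.1 := by
        intro x
        constructor
        · intro hx
          simp only [hLπ, Finset.mem_image, Finset.mem_filter, Finset.mem_univ,
            true_and] at hx
          obtain ⟨y, hy, heq⟩ := hx
          rwa [rowPair_injective k heq] at hy
        · intro hx
          simp only [hLπ, Finset.mem_image, Finset.mem_filter, Finset.mem_univ, true_and]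
          exact ⟨x, hx, rfl⟩
      have hLsub : Lπ ⊆ Pfin k := by
        intro q hq
        simp only [hLπ, Finset.mem_image] at hq
        obtain ⟨y, _, rfl⟩ := hq
        exact rowPair_mem k y
      have hcond : ∀ x : Fin k × Fin (k - 1),
          (π x).1 = if rowPair k x ∈ Lπ then x.1 else colToRow k x.1 x.2 := by
        intro x
        by_cases h : (π x).1 = x.1
        · rw [if_pos ((hmemL x).2 h)]; exact h
        · rw [if_neg (fun hc => h ((hmemL x).1 hc))]
          rcases hg x with h' | h'
          · exact absurd h' h
          · exact h'
      -- regularity of Lπ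
      have hreg : ∀ i : Fin k, (Lset k Lπ i).card = k - 1 := by
        intro i
        have hset : Lset k Lπ i
            = (Finset.univ.filter (fun x : Fin k × Fin (k - 1) =>
                (π x).1 = i)).image (rowPair k) := by
          ext q
          simp only [Lset, Finset.mem_union, Finset.mem_filter, Finset.mem_sdiff,
            Finset.mem_image, Finset.mem_univ, true_and]
          constructor
          · rintro (⟨hqL, hq1⟩ | ⟨⟨hqP, hqL⟩, hq2⟩)
            · simp only [hLπ, Finset.mem_image, Finset.mem_filter, Finset.mem_univ,
                true_and] at hqL
              obtain ⟨x, hx, rfl⟩ := hqL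
              refine ⟨x, ?_, rfl⟩
              rw [hx]
              exact hq1
            · obtain ⟨x, rfl⟩ := rowPair_surjOn k q hqP
              refine ⟨x, ?_, rfl⟩
              have hne : (π x).1 ≠ x.1 := fun hc => hqL ((hmemL x).2 hc)
              rcases hg x with h' | h'
              · exact absurd h' hne
              · rw [h']; exact hq2
          · rintro ⟨x, hx, rfl⟩
            by_cases h : (π x).1 = x.1
            · left
              exact ⟨(hmemL x).2 h, h.symm.trans hx⟩
            · right
              refine ⟨⟨rowPair_mem k x, fun hc => h ((hmemL x).1 hc)⟩, ?_⟩
              rcases hg x with h' | h'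
              · exact absurd h' h
              · show colToRow k x.1 x.2 = i
                rw [← h', hx]
        rw [hset, Finset.card_image_of_injective _ (rowPair_injective k)]
        have hb : (Finset.filter (fun x : Fin k × Fin (k - 1) => (π x).1 = i)
              Finset.univ).card
            = (Finset.filter (fun y : Fin k × Fin (k - 1) => y.1 = i)
              Finset.univ).card := by
          apply Finset.card_bij (fun x _ => π x)
          · intro x hx
            simp only [Finset.mem_filter, Finset.mem_univ, true_and] at hx ⊢
            exact hx
          · intro x _ y _ h
            exact π.injective h
          · intro y hy
            refine ⟨π.symm y, ?_, by simp⟩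
            simp only [Finset.mem_filter, Finset.mem_univ, true_and] at hy ⊢
            simpa using hy
        rw [hb]
        exact card_fst_eq k i
      have hmemS : Lπ ∈ S := by
        rw [hS, Finset.mem_filter, Finset.mem_powerset]
        exact ⟨hLsub, hreg⟩
      -- uniqueness of L
      have huniq : ∀ L ∈ S,
          (∀ x : Fin k × Fin (k - 1),
            (π x).1 = if rowPair k x ∈ L then x.1 else colToRow k x.1 x.2) → L = Lπ := by
        intro L hL hcL
        rw [hS, Finset.mem_filter, Finset.mem_powerset] at hL
        ext q
        constructor
        · intro hq
          obtain ⟨x, rfl⟩ := rowPair_surjOn k q (hL.1 hq)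
          have := hcL x
          rw [if_pos hq] at this
          exact (hmemL x).2 this
        · intro hq
          obtain ⟨x, rfl⟩ := rowPair_surjOn k q (hLsub hq)
          have h1 := (hmemL x).1 hq
          by_contra hc
          have := hcL x
          rw [if_neg hc] at this
          exact colToRow_ne k x.1 x.2 (by rw [← this, h1])
      rw [Finset.sum_eq_single_of_mem Lπ hmemS]
      · rw [if_pos hcond]
        congr 1
        apply Finset.prod_congr rfl
        intro x _
        by_cases h : (π x).1 = x.1
        · rw [if_pos ((hmemL x).2 h), Xi, if_pos h]
        · have h' : (π x).1 = colToRow k x.1 x.2 := (hg x).resolve_left h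
          rw [if_neg (fun hc => h ((hmemL x).1 hc)), Xi, if_neg h, if_pos h']
      · intro L hL hne
        rw [if_neg (fun hc => hne (huniq L hL hc))]
    · -- bad permutation: both sides vanish
      push_neg at hg
      obtain ⟨x0, h1, h2⟩ := hg
      rw [Finset.sum_eq_zero, eq_comm, mul_eq_zero]
      · right
        apply Finset.prod_eq_zero (Finset.mem_univ x0)
        rw [Xi, if_neg h1, if_neg h2]
      · intro L _
        rw [if_neg]
        intro hc
        have := hc x0
        split_ifs at this
        · exact h1 this
        · exact h2 this
  -- now assemble
  rw [theta, ← Matrix.det_transpose, Matrix.det_apply']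
  have hR : ∀ L ∈ S,
      (∑ π ∈ (Finset.univ : Finset (Equiv.Perm (Fin k × Fin (k - 1)))).filter
            (fun π => ∀ x : Fin k × Fin (k - 1),
              (π x).1 = if (x.1, colToRow k x.1 x.2) ∈ L then x.1
                else colToRow k x.1 x.2),
          ((Equiv.Perm.sign π : ℤ) : ℂ) *
            ∏ x : Fin k × Fin (k - 1),
              (if (x.1, colToRow k x.1 x.2) ∈ L then lam x.1 (colToRow k x.1 x.2)
                else mu x.1 (colToRow k x.1 x.2)) *
                a x.1 (colToRow k x.1 x.2) ^ (((π x).2 : ℕ)))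
      = ∑ π : Equiv.Perm (Fin k × Fin (k - 1)),
          if (∀ x : Fin k × Fin (k - 1),
              (π x).1 = if rowPair k x ∈ L then x.1 else colToRow k x.1 x.2) then
            ((Equiv.Perm.sign π : ℤ) : ℂ) *
              ∏ x : Fin k × Fin (k - 1),
                (if rowPair k x ∈ L then lam x.1 (colToRow k x.1 x.2)
                  else mu x.1 (colToRow k x.1 x.2)) *
                  a x.1 (colToRow k x.1 x.2) ^ (((π x).2 : ℕ))
          else 0 := by
    intro L _
    rw [Finset.sum_filter]
    rfl
  rw [Finset.sum_congr rfl hR, Finset.sum_comm]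
  rw [Finset.sum_congr rfl (fun π _ => key π)]
  simp only [Matrix.transpose_apply]


end

end ReducibleSpectral
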